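/- (Box validity implies √d-MEB validity.) Let H be a nonempty set of points in EuclideanSpace ℝ (Fin d) with H ⊆ closedBall(C*, r*), r* ≥ 0. Let y ∈ EuclideanSpace ℝ (Fin d) be a point in the trusted box of H, i.e., for every coordinate i ∈ Fin d there exist h₁, h₂ ∈ H with h₁ i ≤ y i ≤ h₂ i. Then ‖y − C*‖₂ ≤ √d · r*. -/
import Mathlib


/-- Box validity implies `√d`-MEB validity: if the honest points `H` lie in
`closedBall C* r*` and `y` lies in the trusted box of `H` (in every coordinate `i`,
`y i` is between the values `h₁ i` and `h₂ i` of some honest points), then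
`‖y - C*‖ ≤ √d · r*`. -/
theorem box_validity_implies_sqrt_d_meb (d : ℕ)
    (H : Set (EuclideanSpace ℝ (Fin d))) (hne : H.Nonempty)
    (Cstar : EuclideanSpace ℝ (Fin d)) (rstar : ℝ) (hr : 0 ≤ rstar)
    (hH : H ⊆ Metric.closedBall Cstar rstar)
    (y : EuclideanSpace ℝ (Fin d))
    (hy : ∀ i : Fin d, ∃ h₁ ∈ H, ∃ h₂ ∈ H, h₁ i ≤ y i ∧ y i ≤ h₂ i) :
    ‖y - Cstar‖ ≤ Real.sqrt d * rstar := by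
  have hcoord : ∀ i : Fin d, |y i - Cstar i| ≤ rstar := by
    intro i
    obtain ⟨h₁, hh₁, h₂, hh₂, hle1, hle2⟩ := hy i
    have hb : ∀ h ∈ H, |h i - Cstar i| ≤ rstar := by
      intro h hh
      have := hH hh
      rw [Metric.mem_closedBall, dist_eq_norm] at this
      calc |h i - Cstar i| = ‖(h - Cstar : EuclideanSpace ℝ (Fin d)) i‖ := by
            simp [Real.norm_eq_abs]
        _ ≤ ‖h - Cstar‖ := by
            rw [EuclideanSpace.norm_eq]
            rw [show ‖(h - Cstar : EuclideanSpace ℝ (Fin d)) i‖ =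
              Real.sqrt (‖(h - Cstar : EuclideanSpace ℝ (Fin d)) i‖ ^ 2) from
              (Real.sqrt_sq (norm_nonneg _)).symm]
            apply Real.sqrt_le_sqrt
            exact Finset.single_le_sum (f := fun j => ‖(h - Cstar : EuclideanSpace ℝ (Fin d)) j‖ ^ 2)
              (fun j _ => by positivity) (Finset.mem_univ i)
        _ ≤ rstar := this
    have hb1 := hb h₁ hh₁
    have hb2 := hb h₂ hh₂
    rw [abs_le] at *
    constructor <;> nlinarith [hb1.1, hb1.2, hb2.1, hb2.2]
  have h1 : ‖y - Cstar‖ ^ 2 ≤ d * rstar ^ 2 := by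
    rw [EuclideanSpace.norm_eq]
    rw [Real.sq_sqrt (by positivity)]
    calc (∑ i, ‖(y - Cstar : EuclideanSpace ℝ (Fin d)) i‖ ^ 2)
        ≤ ∑ _i : Fin d, rstar ^ 2 := by
          apply Finset.sum_le_sum
          intro i _
          have := hcoord i
          have h2 : ‖(y - Cstar : EuclideanSpace ℝ (Fin d)) i‖ = |y i - Cstar i| := by
            simp [Real.norm_eq_abs]
          rw [h2]
          nlinarith [abs_nonneg (y i - Cstar i)]
      _ = d * rstar ^ 2 := by simp [Finset.sum_const]
  have h2 : (Real.sqrt d * rstar) ^ 2 = d * rstar ^ 2 := by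
    rw [mul_pow, Real.sq_sqrt (Nat.cast_nonneg d)]
  have h3 : ‖y - Cstar‖ ^ 2 ≤ (Real.sqrt d * rstar) ^ 2 := by rw [h2]; exact h1
  exact le_of_pow_le_pow_left₀ two_ne_zero (by positivity) h3
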